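/- Let −1 < α ≤ 0 ≤ β < 1 and define k(x,y) = (x^α + y^α)(x^β + y^β) for x,y > 0. Let a satisfy hypothesis (A.0), let m > 1 and θ ∈ ((1−α)/2, 1], and suppose that sup_{y>1} y^β·(1+a(y))^{−θ} < ∞. Then k satisfies hypothesis (K1) with θ₀ = (1−α)/2: there exists k_* > 0 such that k(x,y) ≤ k_*·ℓ(x)ℓ(y)/(x+y+(x+y)^m) for all x,y > 0. -/
import Mathlib


open MeasureTheory Set Real
open scoped ENNReal

/-- The weight `ℓ`: `ℓ(x) = x^(1-2θ₀)` for `x ∈ (0,1)` and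
`ℓ(x) = (1+a(x))^θ · x^m` for `x > 1`. -/
noncomputable def ell (a : ℝ → ℝ) (θ₀ θ m : ℝ) (x : ℝ) : ℝ :=
  if x < 1 then x ^ (1 - 2 * θ₀) else (1 + a x) ^ θ * x ^ m

lemma ell_exp (α : ℝ) : 1 - 2 * ((1 - α) / 2) = α := by ring

/-- Key inequality in the ordered case `x ≤ y`. -/
lemma key_ineq (a : ℝ → ℝ) (α β θ m S : ℝ)
    (hα0 : α ≤ 0) (hβ0 : 0 ≤ β)
    (ha0 : ∀ x ∈ Ioi (0 : ℝ), 0 ≤ a x)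
    (hm : 1 < m) (hθ0 : 0 < θ)
    (hS : ∀ y ∈ Ioi (1 : ℝ), y ^ β * (1 + a y) ^ (-θ) ≤ S)
    (x y : ℝ) (hx : 0 < x) (hy : 0 < y) (hxy : x ≤ y) :
    (x ^ α + y ^ α) * (x ^ β + y ^ β) * (x + y + (x + y) ^ m) ≤
      4 * (2 + 2 ^ m) * max S 1 * ell a ((1 - α) / 2) θ m x
        * ell a ((1 - α) / 2) θ m y := by
  set L := max S 1 with hL
  have hL1 : (1 : ℝ) ≤ L := le_max_right _ _
  have h2m : (0:ℝ) < 2 ^ m := rpow_pos_of_pos two_pos m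
  have hxα : (0:ℝ) < x ^ α := rpow_pos_of_pos hx α
  have hyα : (0:ℝ) < y ^ α := rpow_pos_of_pos hy α
  have hxβ : (0:ℝ) < x ^ β := rpow_pos_of_pos hx β
  have hyβ : (0:ℝ) < y ^ β := rpow_pos_of_pos hy β
  -- kernel bound
  have hk : (x ^ α + y ^ α) * (x ^ β + y ^ β) ≤ 4 * (x ^ α * y ^ β) := by
    have h1 : y ^ α ≤ x ^ α := rpow_le_rpow_of_nonpos hx hxy hα0
    have h2 : x ^ β ≤ y ^ β := rpow_le_rpow hx.le hxy hβ0
    nlinarith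
  have hk0 : 0 ≤ (x ^ α + y ^ α) * (x ^ β + y ^ β) := by positivity
  -- denominator bound
  have hD0 : (0:ℝ) ≤ x + y + (x + y) ^ m := by positivity
  have hDy : x + y + (x + y) ^ m ≤ 2 * y + 2 ^ m * y ^ m := by
    have h1 : x + y ≤ 2 * y := by linarith
    have h2 : (x + y) ^ m ≤ (2 * y) ^ m :=
      rpow_le_rpow (by linarith) h1 (by linarith)
    have h3 : (2 * y) ^ m = 2 ^ m * y ^ m :=
      mul_rpow (by norm_num) hy.le
    linarith [h2, h3.le, h3.ge]
  -- bound y^β ≤ L * (1+a y)^θ for 1 ≤ y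
  have HB : ∀ z : ℝ, 1 ≤ z → z ^ β ≤ L * (1 + a z) ^ θ := by
    intro z hz
    have haz : 0 ≤ a z := ha0 z (by simp; linarith)
    have h1az : (0:ℝ) < 1 + a z := by linarith
    have hθexp : (1:ℝ) ≤ (1 + a z) ^ θ := one_le_rpow (by linarith) hθ0.le
    rcases eq_or_lt_of_le hz with h | h
    · subst h
      rw [one_rpow]
      calc (1:ℝ) ≤ L := hL1
        _ ≤ L * (1 + a 1) ^ θ := le_mul_of_one_le_right (by linarith) hθexp
    · have hSz := hS z h
      have : z ^ β = z ^ β * (1 + a z) ^ (-θ) * (1 + a z) ^ θ := by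
        rw [mul_assoc, ← rpow_add h1az]
        simp
      rw [this]
      have hbound : z ^ β * (1 + a z) ^ (-θ) ≤ L := le_trans hSz (le_max_left _ _)
      exact mul_le_mul_of_nonneg_right hbound (by positivity) |>.trans
        (le_refl _)
  rcases lt_or_ge y 1 with hy1 | hy1
  · -- both < 1
    have hx1 : x < 1 := lt_of_le_of_lt hxy hy1
    have hex : ell a ((1 - α) / 2) θ m x = x ^ α := by
      rw [ell, if_pos hx1, ell_exp]
    have hey : ell a ((1 - α) / 2) θ m y = y ^ α := by
      rw [ell, if_pos hy1, ell_exp]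
    rw [hex, hey]
    have hym : y ^ m ≤ y := by
      have := rpow_le_rpow_of_exponent_ge hy hy1.le hm.le
      simpa using this
    have hD : x + y + (x + y) ^ m ≤ (2 + 2 ^ m) * y := by
      nlinarith
    have hya : y ^ β * y ≤ L * y ^ α := by
      have h1 : y ^ β * y = y ^ (β + 1) := by
        rw [rpow_add hy, rpow_one]
      have h2 : y ^ (β + 1) ≤ y ^ α :=
        rpow_le_rpow_of_exponent_ge hy hy1.le (by linarith)
      calc y ^ β * y = y ^ (β + 1) := h1
        _ ≤ y ^ α := h2
        _ ≤ L * y ^ α := le_mul_of_one_le_left hyα.le hL1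
    calc (x ^ α + y ^ α) * (x ^ β + y ^ β) * (x + y + (x + y) ^ m)
        ≤ 4 * (x ^ α * y ^ β) * ((2 + 2 ^ m) * y) := by
          apply mul_le_mul hk hD hD0 (by positivity)
      _ = 4 * (2 + 2 ^ m) * (x ^ α * (y ^ β * y)) := by ring
      _ ≤ 4 * (2 + 2 ^ m) * (x ^ α * (L * y ^ α)) := by
          apply mul_le_mul_of_nonneg_left _ (by positivity)
          exact mul_le_mul_of_nonneg_left hya hxα.le
      _ = 4 * (2 + 2 ^ m) * L * x ^ α * y ^ α := by ring
  · -- y ≥ 1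
    have haz : 0 ≤ a y := ha0 y (by simp; linarith)
    have h1ay : (0:ℝ) < 1 + a y := by linarith
    have hey : ell a ((1 - α) / 2) θ m y = (1 + a y) ^ θ * y ^ m := by
      rw [ell, if_neg (not_lt.mpr hy1)]
    have hym : y ≤ y ^ m := by
      have := rpow_le_rpow_of_exponent_le hy1 hm.le
      simpa using this
    have hD : x + y + (x + y) ^ m ≤ (2 + 2 ^ m) * y ^ m := by
      nlinarith
    have hyB : y ^ β ≤ L * (1 + a y) ^ θ := HB y hy1
    rcases lt_or_ge x 1 with hx1 | hx1
    · -- x < 1 ≤ y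
      have hex : ell a ((1 - α) / 2) θ m x = x ^ α := by
        rw [ell, if_pos hx1, ell_exp]
      rw [hex, hey]
      calc (x ^ α + y ^ α) * (x ^ β + y ^ β) * (x + y + (x + y) ^ m)
          ≤ 4 * (x ^ α * y ^ β) * ((2 + 2 ^ m) * y ^ m) := by
            apply mul_le_mul hk hD hD0 (by positivity)
        _ = 4 * (2 + 2 ^ m) * (x ^ α * y ^ β * y ^ m) := by ring
        _ ≤ 4 * (2 + 2 ^ m) * (x ^ α * (L * (1 + a y) ^ θ) * y ^ m) := by
            apply mul_le_mul_of_nonneg_left _ (by positivity)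
            apply mul_le_mul_of_nonneg_right _ (by positivity)
            exact mul_le_mul_of_nonneg_left hyB hxα.le
        _ = 4 * (2 + 2 ^ m) * L * x ^ α * ((1 + a y) ^ θ * y ^ m) := by ring
    · -- 1 ≤ x ≤ y
      have hax : 0 ≤ a x := ha0 x (by simp; linarith)
      have h1ax : (0:ℝ) < 1 + a x := by linarith
      have hex : ell a ((1 - α) / 2) θ m x = (1 + a x) ^ θ * x ^ m := by
        rw [ell, if_neg (not_lt.mpr hx1)]
      rw [hex, hey]
      have hxα1 : x ^ α ≤ 1 := rpow_le_one_of_one_le_of_nonpos hx1 hα0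
      have hellx : (1:ℝ) ≤ (1 + a x) ^ θ * x ^ m := by
        have h1 : (1:ℝ) ≤ (1 + a x) ^ θ := one_le_rpow (by linarith) hθ0.le
        have h2 : (1:ℝ) ≤ x ^ m := one_le_rpow hx1 (by linarith)
        nlinarith
      calc (x ^ α + y ^ α) * (x ^ β + y ^ β) * (x + y + (x + y) ^ m)
          ≤ 4 * (x ^ α * y ^ β) * ((2 + 2 ^ m) * y ^ m) := by
            apply mul_le_mul hk hD hD0 (by positivity)
        _ ≤ 4 * (1 * y ^ β) * ((2 + 2 ^ m) * y ^ m) := by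
            apply mul_le_mul_of_nonneg_right _ (by positivity)
            apply mul_le_mul_of_nonneg_left _ (by norm_num)
            exact mul_le_mul_of_nonneg_right hxα1 hyβ.le
        _ = 4 * (2 + 2 ^ m) * (y ^ β * y ^ m) := by ring
        _ ≤ 4 * (2 + 2 ^ m) * (L * (1 + a y) ^ θ * y ^ m) := by
            apply mul_le_mul_of_nonneg_left _ (by positivity)
            exact mul_le_mul_of_nonneg_right hyB (by positivity)
        _ = 4 * (2 + 2 ^ m) * L * 1 * ((1 + a y) ^ θ * y ^ m) := by ring
        _ ≤ 4 * (2 + 2 ^ m) * L * ((1 + a x) ^ θ * x ^ m) * ((1 + a y) ^ θ * y ^ m) := by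
            apply mul_le_mul_of_nonneg_right _ (by positivity)
            apply mul_le_mul_of_nonneg_left hellx (by positivity)

/-- the kernel `k(x,y) = (x^α + y^α)(x^β + y^β)` with `−1 < α ≤ 0 ≤ β < 1`
satisfies (K1) with `θ₀ = (1−α)/2`, provided `y ↦ y^β (1+a(y))^{−θ}` is bounded on `(1,∞)`. -/
theorem power_kernel_satisfies_K1 (a : ℝ → ℝ) (α β θ m : ℝ)
    (hα : -1 < α) (hα0 : α ≤ 0) (hβ0 : 0 ≤ β) (hβ : β < 1)
    (ha : Measurable a) (ha0 : ∀ x ∈ Ioi (0 : ℝ), 0 ≤ a x)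
    (haloc : ∀ R : ℝ, 0 < R → ∃ C : ℝ, ∀ x ∈ Ioc (0 : ℝ) R, a x ≤ C)
    (hm : 1 < m) (hθl : (1 - α) / 2 < θ) (hθu : θ ≤ 1)
    (hS : ∃ S : ℝ, ∀ y ∈ Ioi (1 : ℝ), y ^ β * (1 + a y) ^ (-θ) ≤ S) :
    ∃ kstar : ℝ, 0 < kstar ∧ ∀ x y : ℝ, 0 < x → 0 < y →
      (x ^ α + y ^ α) * (x ^ β + y ^ β) ≤
        kstar * ell a ((1 - α) / 2) θ m x * ell a ((1 - α) / 2) θ m y /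
          (x + y + (x + y) ^ m) := by
  obtain ⟨S, hSb⟩ := hS
  have hθ0 : 0 < θ := lt_of_le_of_lt (by linarith) hθl
  have h2m : (0:ℝ) < 2 ^ m := rpow_pos_of_pos two_pos m
  have hL1 : (1:ℝ) ≤ max S 1 := le_max_right _ _
  refine ⟨4 * (2 + 2 ^ m) * max S 1, by nlinarith, ?_⟩
  intro x y hx hy
  have hD : (0:ℝ) < x + y + (x + y) ^ m := by positivity
  rw [le_div_iff₀ hD]
  rcases le_total x y with hxy | hxy
  · exact key_ineq a α β θ m S hα0 hβ0 ha0 hm hθ0 hSb x y hx hy hxy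
  · have := key_ineq a α β θ m S hα0 hβ0 ha0 hm hθ0 hSb y x hy hx hxy
    calc (x ^ α + y ^ α) * (x ^ β + y ^ β) * (x + y + (x + y) ^ m)
        = (y ^ α + x ^ α) * (y ^ β + x ^ β) * (y + x + (y + x) ^ m) := by
          rw [add_comm (y:ℝ) x]; ring_nf
      _ ≤ 4 * (2 + 2 ^ m) * max S 1 * ell a ((1 - α) / 2) θ m y
            * ell a ((1 - α) / 2) θ m x := this
      _ = 4 * (2 + 2 ^ m) * max S 1 * ell a ((1 - α) / 2) θ m x
            * ell a ((1 - α) / 2) θ m y := by ring
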